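/- arXiv:2503.05269 — 2 statements merged into one kernel-verified Lean document; each statement's English description precedes it below -/
import Mathlib

section
/- Let X ≥ 3 be a real number. Then the double integral I(X) = ∫_{1/log X}^{10} ∫_{1/log X}^{10} (xy)^{-3/4} · (y-x)^{-1/2} · (x+y)^{-1/2} · 1_{y - x ≥ 1/log X} dx dy satisfies I(X) ≤ C (log X)^{1/2} for an absolute constant C. -/
open MeasureTheory

/-- Elementary integral bound: `∫_a^b x^{-5/4} ≤ 4 a^{-1/4}` for `0 < a ≤ b`. -/
lemma aux_int_rpow_le {a b : ℝ} (ha : 0 < a) (hab : a ≤ b) :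
    (∫ x in a..b, x ^ (-(5 / 4 : ℝ))) ≤ 4 * a ^ (-(1 / 4 : ℝ)) := by
  have h0 : (0 : ℝ) ∉ Set.uIcc a b := by
    rw [Set.uIcc_of_le hab]
    intro h
    exact absurd h.1 (not_le.mpr ha)
  rw [integral_rpow (Or.inr ⟨by norm_num, h0⟩)]
  have e : (-(5 / 4 : ℝ)) + 1 = -(1 / 4 : ℝ) := by norm_num
  rw [e]
  have h1 : (0 : ℝ) ≤ b ^ (-(1 / 4 : ℝ)) := Real.rpow_nonneg (ha.le.trans hab) _
  have h2 : (0 : ℝ) ≤ a ^ (-(1 / 4 : ℝ)) := Real.rpow_nonneg ha.le _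
  rw [div_le_iff_of_neg (by norm_num : (-(1/4 : ℝ)) < 0)]
  nlinarith

/-- The pointwise bound for the integrand. -/
lemma aux_ptwise {x y : ℝ} (hx : 0 < x) (hxy : x < y) :
    (x * y) ^ (-(3 / 4 : ℝ)) * (y - x) ^ (-(1 / 2 : ℝ)) * (x + y) ^ (-(1 / 2 : ℝ)) ≤
      y ^ (-(5 / 4 : ℝ)) * (x ^ (-(5 / 4 : ℝ)) + (y - x) ^ (-(5 / 4 : ℝ))) := by
  have hy : 0 < y := hx.trans hxy
  have hyx : 0 < y - x := by linarith
  have h1 : (x * y) ^ (-(3 / 4 : ℝ)) = x ^ (-(3 / 4 : ℝ)) * y ^ (-(3 / 4 : ℝ)) :=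
    Real.mul_rpow hx.le hy.le
  have h2 : (x + y) ^ (-(1 / 2 : ℝ)) ≤ y ^ (-(1 / 2 : ℝ)) :=
    Real.rpow_le_rpow_of_nonpos hy (by linarith) (by norm_num)
  have hcore : x ^ (-(3 / 4 : ℝ)) * (y - x) ^ (-(1 / 2 : ℝ)) ≤
      x ^ (-(5 / 4 : ℝ)) + (y - x) ^ (-(5 / 4 : ℝ)) := by
    rcases le_total x (y - x) with h | h
    · have hle : (y - x) ^ (-(1 / 2 : ℝ)) ≤ x ^ (-(1 / 2 : ℝ)) :=
        Real.rpow_le_rpow_of_nonpos hx h (by norm_num)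
      calc x ^ (-(3 / 4 : ℝ)) * (y - x) ^ (-(1 / 2 : ℝ))
          ≤ x ^ (-(3 / 4 : ℝ)) * x ^ (-(1 / 2 : ℝ)) :=
            mul_le_mul_of_nonneg_left hle (Real.rpow_nonneg hx.le _)
        _ = x ^ (-(5 / 4 : ℝ)) := by
            rw [← Real.rpow_add hx]; norm_num
        _ ≤ _ := le_add_of_nonneg_right (Real.rpow_nonneg hyx.le _)
    · have hle : x ^ (-(3 / 4 : ℝ)) ≤ (y - x) ^ (-(3 / 4 : ℝ)) :=
        Real.rpow_le_rpow_of_nonpos hyx h (by norm_num)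
      calc x ^ (-(3 / 4 : ℝ)) * (y - x) ^ (-(1 / 2 : ℝ))
          ≤ (y - x) ^ (-(3 / 4 : ℝ)) * (y - x) ^ (-(1 / 2 : ℝ)) :=
            mul_le_mul_of_nonneg_right hle (Real.rpow_nonneg hyx.le _)
        _ = (y - x) ^ (-(5 / 4 : ℝ)) := by
            rw [← Real.rpow_add hyx]; norm_num
        _ ≤ _ := le_add_of_nonneg_left (Real.rpow_nonneg hx.le _)
  calc (x * y) ^ (-(3 / 4 : ℝ)) * (y - x) ^ (-(1 / 2 : ℝ)) * (x + y) ^ (-(1 / 2 : ℝ))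
      = (x ^ (-(3 / 4 : ℝ)) * (y - x) ^ (-(1 / 2 : ℝ))) *
          (y ^ (-(3 / 4 : ℝ)) * (x + y) ^ (-(1 / 2 : ℝ))) := by rw [h1]; ring
    _ ≤ (x ^ (-(5 / 4 : ℝ)) + (y - x) ^ (-(5 / 4 : ℝ))) *
          (y ^ (-(3 / 4 : ℝ)) * y ^ (-(1 / 2 : ℝ))) := by
        apply mul_le_mul hcore
        · exact mul_le_mul_of_nonneg_left h2 (Real.rpow_nonneg hy.le _)
        · exact mul_nonneg (Real.rpow_nonneg hy.le _) (Real.rpow_nonneg (by linarith) _)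
        · exact add_nonneg (Real.rpow_nonneg hx.le _) (Real.rpow_nonneg hyx.le _)
    _ = y ^ (-(5 / 4 : ℝ)) * (x ^ (-(5 / 4 : ℝ)) + (y - x) ^ (-(5 / 4 : ℝ))) := by
        rw [← Real.rpow_add hy]; ring_nf

theorem stmt_4 :
    ∃ C : ℝ, ∀ X : ℝ, 3 ≤ X →
      (∫ y in (1 / Real.log X)..10, ∫ x in (1 / Real.log X)..10,
          (if 1 / Real.log X ≤ y - x then
            (x * y) ^ (-(3 / 4 : ℝ)) * (y - x) ^ (-(1 / 2 : ℝ)) * (x + y) ^ (-(1 / 2 : ℝ))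
          else 0)) ≤ C * (Real.log X) ^ ((1 : ℝ) / 2) := by
  refine ⟨32, fun X hX => ?_⟩
  have hL : 1 < Real.log X := by
    have h3 : Real.exp 1 < 3 := lt_of_lt_of_le Real.exp_one_lt_d9 (by norm_num)
    have := Real.log_lt_log (Real.exp_pos 1) (lt_of_lt_of_le h3 hX)
    rwa [Real.log_exp] at this
  have hL0 : 0 < Real.log X := lt_trans one_pos hL
  set a : ℝ := 1 / Real.log X with ha
  have ha0 : 0 < a := by positivity
  have ha1 : a < 1 := by rw [ha, div_lt_one hL0]; exact hL
  have ha10 : a ≤ 10 := by linarith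
  -- the majorant for the inner integral
  set H : ℝ → ℝ := fun y => 8 * a ^ (-(1 / 4 : ℝ)) * y ^ (-(5 / 4 : ℝ)) with hH
  have hHcont : ContinuousOn H (Set.uIcc a 10) := by
    apply continuousOn_const.mul
    apply continuousOn_id.rpow_const
    intro x hx
    rw [Set.uIcc_of_le ha10] at hx
    exact Or.inl (ne_of_gt (lt_of_lt_of_le ha0 hx.1))
  have hHint : IntervalIntegrable H volume a 10 := hHcont.intervalIntegrable
  have hHnonneg : ∀ y ∈ Set.Icc a 10, 0 ≤ H y := by
    intro y hy
    have hy0 : 0 < y := lt_of_lt_of_le ha0 hy.1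
    exact mul_nonneg (by positivity) (Real.rpow_nonneg hy0.le _)
  -- bound on the inner integral
  have key : ∀ y ∈ Set.Icc a 10,
      (∫ x in a..10, (if a ≤ y - x then
          (x * y) ^ (-(3 / 4 : ℝ)) * (y - x) ^ (-(1 / 2 : ℝ)) * (x + y) ^ (-(1 / 2 : ℝ))
        else 0)) ≤ H y := by
    intro y hy
    have hy0 : 0 < y := lt_of_lt_of_le ha0 hy.1
    set f : ℝ → ℝ := fun x => if a ≤ y - x then
        (x * y) ^ (-(3 / 4 : ℝ)) * (y - x) ^ (-(1 / 2 : ℝ)) * (x + y) ^ (-(1 / 2 : ℝ))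
      else 0 with hf
    by_cases hfi : IntervalIntegrable f volume a 10
    · rcases lt_or_ge y (2 * a) with hy2 | hy2
      · -- integrand vanishes identically
        have hz : Set.EqOn f (fun _ => (0 : ℝ)) (Set.uIcc a 10) := by
          intro x hx
          rw [Set.uIcc_of_le ha10] at hx
          exact if_neg (by push_neg; linarith [hx.1])
        rw [intervalIntegral.integral_congr hz]
        simpa using hHnonneg y hy
      · -- split the integral at c = y - a
        have hac : a ≤ y - a := by linarith
        have hc10 : y - a ≤ 10 := by linarith [hy.2]
        have hsub : Set.uIcc a (y - a) ⊆ Set.uIcc a 10 := by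
          rw [Set.uIcc_of_le hac, Set.uIcc_of_le ha10]
          exact Set.Icc_subset_Icc le_rfl hc10
        have hsub2 : Set.uIcc (y - a) 10 ⊆ Set.uIcc a 10 := by
          rw [Set.uIcc_of_le hc10, Set.uIcc_of_le ha10]
          exact Set.Icc_subset_Icc hac le_rfl
        have hfi1 : IntervalIntegrable f volume a (y - a) := hfi.mono_set hsub
        have hfi2 : IntervalIntegrable f volume (y - a) 10 := hfi.mono_set hsub2
        have hsplit : (∫ x in a..10, f x) =
            (∫ x in a..(y - a), f x) + ∫ x in (y - a)..10, f x :=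
          (intervalIntegral.integral_add_adjacent_intervals hfi1 hfi2).symm
        have h2 : (∫ x in (y - a)..10, f x) = 0 := by
          rw [intervalIntegral.integral_of_le hc10]
          apply integral_eq_zero_of_ae
          filter_upwards [ae_restrict_mem measurableSet_Ioc] with x hx
          exact if_neg (by push_neg; linarith [hx.1])
        -- continuity of the majorant pieces on [a, y - a]
        have hcont1 : ContinuousOn (fun x : ℝ => x ^ (-(5 / 4 : ℝ))) (Set.uIcc a (y - a)) := by
          apply continuousOn_id.rpow_const
          intro x hx
          rw [Set.uIcc_of_le hac] at hx
          exact Or.inl (ne_of_gt (lt_of_lt_of_le ha0 hx.1))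
        have hcont2 : ContinuousOn (fun x : ℝ => (y - x) ^ (-(5 / 4 : ℝ)))
            (Set.uIcc a (y - a)) := by
          apply (continuousOn_const.sub continuousOn_id).rpow_const
          intro x hx
          rw [Set.uIcc_of_le hac] at hx
          exact Or.inl (ne_of_gt (by show (0:ℝ) < y - x; linarith [hx.2]))
        have hint1 : IntervalIntegrable (fun x : ℝ => x ^ (-(5 / 4 : ℝ))) volume a (y - a) :=
          hcont1.intervalIntegrable
        have hint2 : IntervalIntegrable (fun x : ℝ => (y - x) ^ (-(5 / 4 : ℝ)))
            volume a (y - a) := hcont2.intervalIntegrable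
        have hbnd : ∀ x ∈ Set.Icc a (y - a), f x ≤
            y ^ (-(5 / 4 : ℝ)) * (x ^ (-(5 / 4 : ℝ)) + (y - x) ^ (-(5 / 4 : ℝ))) := by
          intro x hx
          have hx0 : 0 < x := lt_of_lt_of_le ha0 hx.1
          have hxy : x < y := by linarith [hx.2]
          by_cases hcond : a ≤ y - x
          · rw [hf]; simp only [if_pos hcond]
            exact aux_ptwise hx0 hxy
          · rw [hf]; simp only [if_neg hcond]
            have hyx : 0 < y - x := by linarith
            positivity
        have h1 : (∫ x in a..(y - a), f x) ≤
            ∫ x in a..(y - a),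
              y ^ (-(5 / 4 : ℝ)) * (x ^ (-(5 / 4 : ℝ)) + (y - x) ^ (-(5 / 4 : ℝ))) :=
          intervalIntegral.integral_mono_on hac hfi1
            ((continuousOn_const.mul (hcont1.add hcont2)).intervalIntegrable) hbnd
        have hcomp : (∫ x in a..(y - a), (y - x) ^ (-(5 / 4 : ℝ))) =
            ∫ x in a..(y - a), x ^ (-(5 / 4 : ℝ)) := by
          rw [intervalIntegral.integral_comp_sub_left (fun u => u ^ (-(5 / 4 : ℝ))) y,
            show y - (y - a) = a by ring]
        have hval : (∫ x in a..(y - a),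
              y ^ (-(5 / 4 : ℝ)) * (x ^ (-(5 / 4 : ℝ)) + (y - x) ^ (-(5 / 4 : ℝ)))) ≤ H y := by
          rw [intervalIntegral.integral_const_mul,
            intervalIntegral.integral_add hint1 hint2, hcomp]
          have hle : (∫ x in a..(y - a), x ^ (-(5 / 4 : ℝ))) ≤ 4 * a ^ (-(1 / 4 : ℝ)) :=
            aux_int_rpow_le ha0 hac
          calc y ^ (-(5 / 4 : ℝ)) *
                ((∫ x in a..(y - a), x ^ (-(5 / 4 : ℝ))) +
                  ∫ x in a..(y - a), x ^ (-(5 / 4 : ℝ)))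
              ≤ y ^ (-(5 / 4 : ℝ)) * (4 * a ^ (-(1 / 4 : ℝ)) + 4 * a ^ (-(1 / 4 : ℝ))) := by
                apply mul_le_mul_of_nonneg_left (by linarith) (Real.rpow_nonneg hy0.le _)
            _ = H y := by rw [hH]; ring
        rw [hsplit, h2, add_zero]
        exact le_trans h1 hval
    · rw [intervalIntegral.integral_undef hfi]
      exact hHnonneg y hy
  -- bound the outer integral
  have houter : (∫ y in a..10, ∫ x in a..10, (if a ≤ y - x then
        (x * y) ^ (-(3 / 4 : ℝ)) * (y - x) ^ (-(1 / 2 : ℝ)) * (x + y) ^ (-(1 / 2 : ℝ))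
      else 0)) ≤ ∫ y in a..10, H y := by
    by_cases hFi : IntervalIntegrable (fun y => ∫ x in a..10, (if a ≤ y - x then
        (x * y) ^ (-(3 / 4 : ℝ)) * (y - x) ^ (-(1 / 2 : ℝ)) * (x + y) ^ (-(1 / 2 : ℝ))
      else 0)) volume a 10
    · exact intervalIntegral.integral_mono_on ha10 hFi hHint key
    · rw [intervalIntegral.integral_undef hFi]
      exact intervalIntegral.integral_nonneg ha10 hHnonneg
  have hHval : (∫ y in a..10, H y) ≤ 32 * a ^ (-(1 / 2 : ℝ)) := by
    rw [hH]
    rw [intervalIntegral.integral_const_mul]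
    have hle : (∫ y in a..10, y ^ (-(5 / 4 : ℝ))) ≤ 4 * a ^ (-(1 / 4 : ℝ)) :=
      aux_int_rpow_le ha0 ha10
    have h8 : (0:ℝ) ≤ 8 * a ^ (-(1 / 4 : ℝ)) := by positivity
    calc 8 * a ^ (-(1 / 4 : ℝ)) * ∫ y in a..10, y ^ (-(5 / 4 : ℝ))
        ≤ 8 * a ^ (-(1 / 4 : ℝ)) * (4 * a ^ (-(1 / 4 : ℝ))) :=
          mul_le_mul_of_nonneg_left hle h8
      _ = 32 * (a ^ (-(1 / 4 : ℝ)) * a ^ (-(1 / 4 : ℝ))) := by ring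
      _ = 32 * a ^ (-(1 / 2 : ℝ)) := by
          rw [← Real.rpow_add ha0]; norm_num
  have haL : a ^ (-(1 / 2 : ℝ)) = (Real.log X) ^ ((1 : ℝ) / 2) := by
    rw [ha, one_div, Real.inv_rpow hL0.le, Real.rpow_neg hL0.le, inv_inv]
  calc (∫ y in a..10, ∫ x in a..10, (if a ≤ y - x then
        (x * y) ^ (-(3 / 4 : ℝ)) * (y - x) ^ (-(1 / 2 : ℝ)) * (x + y) ^ (-(1 / 2 : ℝ))
      else 0)) ≤ ∫ y in a..10, H y := houter
    _ ≤ 32 * a ^ (-(1 / 2 : ℝ)) := hHval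
    _ = 32 * (Real.log X) ^ ((1 : ℝ) / 2) := by rw [haL]
end

section
/- Let k ≥ 2 and let L_0 = {2e_j* : 1 ≤ j ≤ k} ∪ {e_i* + e_j* : 1 ≤ i < j ≤ k}, a family of q = k(k+1)/2 linear forms on ℝ^k. There is no proper subfamily L' ⊊ L_0 such that the all-ones functional B = ∑_j e_j* lies in the span of L' and #L' − rank(L') = #L_0 − rank(L_0) = k(k-1)/2. -/
open Submodule Set Module

namespace Stmt13Aux

variable {k : ℕ}

noncomputable def P (k : ℕ) (j : Fin k) : (Fin k → ℝ) →ₗ[ℝ] ℝ := LinearMap.proj j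

lemma P_apply (j i : Fin k) : P k j (Pi.single i 1) = if i = j then 1 else 0 := by
  simp [P, Pi.single_apply, eq_comm]

lemma repr_eq (f : (Fin k → ℝ) →ₗ[ℝ] ℝ) :
    f = ∑ j, f (Pi.single j 1) • P k j := by
  refine LinearMap.ext fun x => ?_
  have hx : x = ∑ j, x j • (Pi.single j 1 : Fin k → ℝ) := by
    conv_lhs => rw [← Finset.univ_sum_single x]
    congr 1
    funext j
    rw [← Pi.single_smul, smul_eq_mul, mul_one]
  conv_lhs => rw [hx]
  simp [P, mul_comm]

lemma span_P_top : span ℝ (Set.range (P k)) = ⊤ := by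
  rw [eq_top_iff]
  intro f _
  rw [repr_eq f]
  exact Submodule.sum_mem _ fun j _ =>
    Submodule.smul_mem _ _ (subset_span ⟨j, rfl⟩)

noncomputable def φ (k : ℕ) : Sym2 (Fin k) → ((Fin k → ℝ) →ₗ[ℝ] ℝ) :=
  Sym2.lift ⟨fun i j => P k i + P k j, fun i j => add_comm _ _⟩

lemma φ_mk (i j : Fin k) : φ k s(i, j) = P k i + P k j := rfl

lemma coeff_eq {i j i' j' : Fin k} (h : P k i + P k j = P k i' + P k j') (x : Fin k) :
    ((if x = i then (1:ℝ) else 0) + (if x = j then 1 else 0)) =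
      ((if x = i' then (1:ℝ) else 0) + (if x = j' then 1 else 0)) := by
  have := congrArg (fun g => g (Pi.single x 1)) h
  simpa [P_apply] using this

lemma φ_inj : Function.Injective (φ k) := by
  intro a b
  induction a using Sym2.ind with
  | _ i j =>
  induction b using Sym2.ind with
  | _ i' j' =>
  intro h
  rw [φ_mk, φ_mk] at h
  rw [Sym2.eq_iff]
  by_cases e1 : i = i'
  · subst e1
    refine Or.inl ⟨rfl, ?_⟩
    by_contra e4
    have hj := coeff_eq h j
    rw [if_neg e4, if_pos rfl] at hj
    split_ifs at hj <;> norm_num at hj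
  · have hi := coeff_eq h i
    rw [if_pos rfl, if_neg e1] at hi
    by_cases e2 : i = j'
    · subst e2
      refine Or.inr ⟨rfl, ?_⟩
      by_contra e3
      have hj := coeff_eq h j
      rw [if_pos rfl, if_neg e3] at hj
      split_ifs at hj <;> norm_num at hj
    · rw [if_neg e2] at hi
      exfalso
      split_ifs at hi <;> norm_num at hi

lemma loop_eq_φ (j : Fin k) : (2:ℝ) • P k j = φ k s(j, j) := by
  rw [φ_mk, two_smul]

lemma loop_inj : Function.Injective (fun j => (2:ℝ) • P k j) := by
  intro a b h
  simp only [loop_eq_φ] at h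
  have := φ_inj h
  rw [Sym2.eq_iff] at this
  tauto

lemma loop_ne_edge {l i j : Fin k} (hij : i ≠ j) :
    (2:ℝ) • P k l ≠ P k i + P k j := by
  intro h
  rw [loop_eq_φ, ← φ_mk] at h
  have := φ_inj h
  rw [Sym2.eq_iff] at this
  rcases this with ⟨h1, h2⟩ | ⟨h1, h2⟩ <;> exact hij (h1 ▸ h2 ▸ rfl)

def L0def (k : ℕ) : Set ((Fin k → ℝ) →ₗ[ℝ] ℝ) :=
  {f | (∃ j : Fin k, f = (2 : ℝ) • (LinearMap.proj j : (Fin k → ℝ) →ₗ[ℝ] ℝ)) ∨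
    ∃ i j : Fin k, i < j ∧ f = (LinearMap.proj i : (Fin k → ℝ) →ₗ[ℝ] ℝ) +
      (LinearMap.proj j : (Fin k → ℝ) →ₗ[ℝ] ℝ)}

lemma L0_eq_range : L0def k = Set.range (φ k) := by
  ext f
  constructor
  · rintro (⟨j, rfl⟩ | ⟨i, j, hij, rfl⟩)
    · exact ⟨s(j, j), (loop_eq_φ j).symm⟩
    · exact ⟨s(i, j), rfl⟩
  · rintro ⟨s, rfl⟩
    induction s using Sym2.ind with
    | _ i j =>
    rw [φ_mk]
    rcases lt_trichotomy i j with h | h | h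
    · exact Or.inr ⟨i, j, h, rfl⟩
    · subst h
      exact Or.inl ⟨i, by rw [two_smul]; rfl⟩
    · exact Or.inr ⟨j, i, h, by rw [add_comm]; rfl⟩

lemma L0_finite : (L0def k).Finite := by
  rw [L0_eq_range]; exact Set.finite_range _

lemma L0_ncard : (L0def k).ncard = (k + 1).choose 2 := by
  rw [L0_eq_range, ← Set.image_univ, Set.ncard_image_of_injective _ φ_inj,
    Set.ncard_univ, Nat.card_eq_fintype_card, Sym2.card, Fintype.card_fin]

lemma qarith (hk : 2 ≤ k) :
    (k + 1).choose 2 = k + k * (k - 1) / 2 := by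
  have h1 : (k + 1).choose 2 = (k + 1) * k / 2 := by
    rw [Nat.choose_two_right]; simp
  have h2 : k * (k - 1) + 2 * k = (k + 1) * k := by
    cases k with
    | zero => rfl
    | succ n => rw [Nat.succ_sub_one]; ring
  have h3 : Even ((k + 1) * k) := by
    rw [mul_comm]; exact Nat.even_mul_succ_self k
  obtain ⟨c, hc⟩ := h3
  omega

lemma span_L0_top : span ℝ (L0def k) = ⊤ := by
  rw [← top_le_iff, ← span_P_top]
  apply span_le.mpr
  rintro f ⟨j, rfl⟩
  have h2 : ((2:ℝ) • P k j) ∈ span ℝ (L0def k) :=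
    subset_span (Or.inl ⟨j, rfl⟩)
  have := Submodule.smul_mem _ (2⁻¹ : ℝ) h2
  rwa [smul_smul, inv_mul_cancel₀ (by norm_num : (2:ℝ) ≠ 0), one_smul] at this

lemma finrank_dual : finrank ℝ ((Fin k → ℝ) →ₗ[ℝ] ℝ) = k := by
  rw [Module.finrank_linearMap_self, Module.finrank_pi, Fintype.card_fin]

lemma finrank_span_L0 : finrank ℝ (span ℝ (L0def k)) = k := by
  rw [span_L0_top, finrank_top, finrank_dual]

lemma finrank_span_le_ncard {s : Set ((Fin k → ℝ) →ₗ[ℝ] ℝ)} (hs : s.Finite) :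
    finrank ℝ (span ℝ s) ≤ s.ncard := by
  rw [Set.ncard_eq_toFinset_card s hs]
  have := finrank_span_finset_le_card (R := ℝ) hs.toFinset
  rwa [Set.Finite.coe_toFinset] at this

end Stmt13Aux

theorem stmt_13 (k : ℕ) (hk : 2 ≤ k) :
    let L0 : Set ((Fin k → ℝ) →ₗ[ℝ] ℝ) :=
      {f | (∃ j : Fin k, f = (2 : ℝ) • (LinearMap.proj j : (Fin k → ℝ) →ₗ[ℝ] ℝ)) ∨
        ∃ i j : Fin k, i < j ∧ f = (LinearMap.proj i : (Fin k → ℝ) →ₗ[ℝ] ℝ) +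
          (LinearMap.proj j : (Fin k → ℝ) →ₗ[ℝ] ℝ)}
    let B : (Fin k → ℝ) →ₗ[ℝ] ℝ := ∑ j : Fin k, (LinearMap.proj j : (Fin k → ℝ) →ₗ[ℝ] ℝ)
    L0.ncard - Module.finrank ℝ (Submodule.span ℝ L0) = k * (k - 1) / 2 ∧
      ¬∃ L' : Set ((Fin k → ℝ) →ₗ[ℝ] ℝ), L' ⊆ L0 ∧ L' ≠ L0 ∧
        B ∈ Submodule.span ℝ L' ∧
        L'.ncard - Module.finrank ℝ (Submodule.span ℝ L') = k * (k - 1) / 2 := by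
  intro L0 B
  have hL0 : L0 = Stmt13Aux.L0def k := rfl
  have hq := Stmt13Aux.qarith hk
  constructor
  · rw [hL0, Stmt13Aux.L0_ncard, Stmt13Aux.finrank_span_L0]
    omega
  · rintro ⟨L', hsub, hne, -, hcnt⟩
    rw [hL0] at hsub hne
    classical
    have hL0fin := Stmt13Aux.L0_finite (k := k)
    have hfin : L'.Finite := hL0fin.subset hsub
    set J : Set (Fin k) := {j | (2:ℝ) • Stmt13Aux.P k j ∉ L'} with hJ
    have hJfin : J.Finite := Set.toFinite J
    set m := J.ncard with hm
    set r := Module.finrank ℝ (Submodule.span ℝ L') with hr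
    set n := L'.ncard with hn
    have hloopL0 : ∀ j : Fin k, (2:ℝ) • Stmt13Aux.P k j ∈ Stmt13Aux.L0def k :=
      fun j => Or.inl ⟨j, rfl⟩
    have hmk : m ≤ k := by
      have := Set.ncard_le_ncard (Set.subset_univ J) Set.finite_univ
      rwa [Set.ncard_univ, Nat.card_eq_fintype_card, Fintype.card_fin] at this
    -- Step A : k ≤ r + m
    have hA : k ≤ r + m := by
      have htop : Submodule.span ℝ (L' ∪ (Stmt13Aux.P k '' J)) = ⊤ := by
        rw [← top_le_iff, ← Stmt13Aux.span_P_top]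
        apply Submodule.span_le.mpr
        rintro f ⟨j, rfl⟩
        by_cases hj : j ∈ J
        · exact Submodule.subset_span (Or.inr ⟨j, hj, rfl⟩)
        · simp only [hJ, Set.mem_setOf_eq, not_not] at hj
          have h2 : ((2:ℝ) • Stmt13Aux.P k j) ∈
              Submodule.span ℝ (L' ∪ (Stmt13Aux.P k '' J)) :=
            Submodule.subset_span (Or.inl hj)
          have := Submodule.smul_mem _ (2⁻¹ : ℝ) h2
          rwa [smul_smul, inv_mul_cancel₀ (by norm_num : (2:ℝ) ≠ 0), one_smul] at this
      calc k = Module.finrank ℝ (Submodule.span ℝ (L' ∪ (Stmt13Aux.P k '' J))) := by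
              rw [htop, finrank_top, Stmt13Aux.finrank_dual]
        _ = Module.finrank ℝ ((Submodule.span ℝ L') ⊔ (Submodule.span ℝ (Stmt13Aux.P k '' J)) :
              Submodule ℝ ((Fin k → ℝ) →ₗ[ℝ] ℝ)) := by rw [Submodule.span_union]
        _ ≤ r + Module.finrank ℝ (Submodule.span ℝ (Stmt13Aux.P k '' J)) :=
              Submodule.finrank_add_le_finrank_add_finrank _ _
        _ ≤ r + m := Nat.add_le_add_left
              ((Stmt13Aux.finrank_span_le_ncard (hJfin.image _)).trans
                (Set.ncard_image_le hJfin)) r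
    have hC : r ≤ n := Stmt13Aux.finrank_span_le_ncard hfin
    have hloopsub : ((fun j => (2:ℝ) • Stmt13Aux.P k j) '' J) ⊆ Stmt13Aux.L0def k := by
      rintro f ⟨j, _, rfl⟩; exact hloopL0 j
    have hdiffcard :
        (Stmt13Aux.L0def k \ ((fun j => (2:ℝ) • Stmt13Aux.P k j) '' J)).ncard
          = (k + 1).choose 2 - m := by
      rw [Set.ncard_diff hloopsub (hJfin.image _), Stmt13Aux.L0_ncard,
        Set.ncard_image_of_injective _ Stmt13Aux.loop_inj]
    have hsub2 : L' ⊆ Stmt13Aux.L0def k \ ((fun j => (2:ℝ) • Stmt13Aux.P k j) '' J) := by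
      intro f hf
      refine ⟨hsub hf, ?_⟩
      rintro ⟨j, hj, rfl⟩
      exact hj hf
    have hB2 : n ≤ (k + 1).choose 2 - m := by
      rw [hn, ← hdiffcard]
      exact Set.ncard_le_ncard hsub2 hL0fin.diff
    have hkey : r + m = k ∧ n = (k + 1).choose 2 - m := by omega
    have hLeq : L' = Stmt13Aux.L0def k \ ((fun j => (2:ℝ) • Stmt13Aux.P k j) '' J) := by
      refine Set.eq_of_subset_of_ncard_le hsub2 ?_ hL0fin.diff
      rw [hdiffcard, ← hn]
      omega
    by_cases hm0 : m = 0
    · have hJe : J = ∅ := (Set.ncard_eq_zero hJfin).mp hm0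
      apply hne
      rw [hLeq, hJe]
      simp
    · by_cases hex : ∃ i : Fin k, i ∉ J
      · obtain ⟨i, hi⟩ := hex
        have hPi : Stmt13Aux.P k i ∈ Submodule.span ℝ L' := by
          simp only [hJ, Set.mem_setOf_eq, not_not] at hi
          have := Submodule.smul_mem _ (2⁻¹ : ℝ) (Submodule.subset_span hi)
          rwa [smul_smul, inv_mul_cancel₀ (by norm_num : (2:ℝ) ≠ 0), one_smul] at this
        have hall : ∀ x : Fin k, Stmt13Aux.P k x ∈ Submodule.span ℝ L' := by
          intro x
          by_cases hx : x = i
          · rw [hx]; exact hPi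
          · have hix : i ≠ x := fun h => hx h.symm
            have hedge : Stmt13Aux.P k i + Stmt13Aux.P k x ∈ L' := by
              rw [hLeq]
              constructor
              · rcases lt_or_gt_of_ne hix with h | h
                · exact Or.inr ⟨i, x, h, rfl⟩
                · exact Or.inr ⟨x, i, h, by rw [add_comm]; rfl⟩
              · rintro ⟨l, _, hlf⟩
                exact Stmt13Aux.loop_ne_edge hix hlf
            have := Submodule.sub_mem _ (Submodule.subset_span hedge) hPi
            simpa using this
        have hrk : r = k := by
          have hspan : Submodule.span ℝ L' = ⊤ := by
            rw [← top_le_iff, ← Stmt13Aux.span_P_top]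
            exact Submodule.span_le.mpr (by rintro f ⟨x, rfl⟩; exact hall x)
          rw [hr, hspan, finrank_top, Stmt13Aux.finrank_dual]
        omega
      · push_neg at hex
        have hJu : J = Set.univ := Set.eq_univ_of_forall hex
        have hmk' : m = k := by
          rw [hm, hJu, Set.ncard_univ, Nat.card_eq_fintype_card, Fintype.card_fin]
        have hr0 : r = 0 := by omega
        have hspan0 : Submodule.span ℝ L' = ⊥ := Submodule.finrank_eq_zero.mp hr0.symm.symm
        have h01 : (0 : ℕ) < 1 := Nat.zero_lt_one
        let i0 : Fin k := ⟨0, by omega⟩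
        let i1 : Fin k := ⟨1, by omega⟩
        have hi01 : i0 < i1 := by simp [i0, i1, Fin.lt_def]
        have hedge : Stmt13Aux.P k i0 + Stmt13Aux.P k i1 ∈ L' := by
          rw [hLeq]
          refine ⟨Or.inr ⟨i0, i1, hi01, rfl⟩, ?_⟩
          rintro ⟨l, _, hlf⟩
          exact Stmt13Aux.loop_ne_edge (ne_of_lt hi01) hlf
        have hmem := Submodule.subset_span (R := ℝ) hedge
        rw [hspan0] at hmem
        rw [SetLike.mem_coe, Submodule.mem_bot] at hmem
        have h0 := congrArg (fun g => g (Pi.single i0 1)) hmem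
        simp [Stmt13Aux.P_apply, (ne_of_lt hi01)] at h0
end
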